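/- Let C be a subset of a normed space, S a commuting family of nonexpansive self-maps of C, R : C → C a nonexpansive retraction onto Fix S, and T : C → C a nonexpansive map commuting with every member of S. If (xₙ) ⊆ C satisfies ‖T R xₙ − xₙ‖ → 0, then ‖S' xₙ − xₙ‖ → 0 for every S' ∈ S, ‖R xₙ − xₙ‖ → 0, and ‖T xₙ − xₙ‖ → 0. -/

import Mathlib

open Filter

/-- Lemma: let `S` be a commuting family of nonexpansive self-maps of `C`, `R` a
nonexpansive retraction of `C` onto `Fix S`, and `T` a nonexpansive self-map of `C`
commuting with every member of `S`.  Every approximate fixed point sequence of `T ∘ R`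
is an approximate fixed point sequence of every member of `S`, of `R`, and of `T`. -/
theorem approx_fixed_point_of_TR
    {E : Type*} [NormedAddCommGroup E] [NormedSpace ℝ E] (C : Set E)
    (S : Set (E → E)) (R T : E → E)
    (hSmaps : ∀ U ∈ S, Set.MapsTo U C C)
    (hSnonexp : ∀ U ∈ S, ∀ x ∈ C, ∀ y ∈ C, ‖U x - U y‖ ≤ ‖x - y‖)
    (hScomm : ∀ U ∈ S, ∀ V ∈ S, ∀ x ∈ C, U (V x) = V (U x))
    (hRmaps : Set.MapsTo R C C)
    (hRnonexp : ∀ x ∈ C, ∀ y ∈ C, ‖R x - R y‖ ≤ ‖x - y‖)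
    (hRrange : R '' C = {x ∈ C | ∀ U ∈ S, U x = x})
    (hRretr : ∀ x ∈ C, (∀ U ∈ S, U x = x) → R x = x)
    (hTmaps : Set.MapsTo T C C)
    (hTnonexp : ∀ x ∈ C, ∀ y ∈ C, ‖T x - T y‖ ≤ ‖x - y‖)
    (hTcomm : ∀ U ∈ S, ∀ x ∈ C, T (U x) = U (T x))
    (x : ℕ → E) (hxC : ∀ n, x n ∈ C)
    (hafps : Tendsto (fun n => ‖T (R (x n)) - x n‖) atTop (nhds 0)) :
    (∀ U ∈ S, Tendsto (fun n => ‖U (x n) - x n‖) atTop (nhds 0)) ∧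
      Tendsto (fun n => ‖R (x n) - x n‖) atTop (nhds 0) ∧
      Tendsto (fun n => ‖T (x n) - x n‖) atTop (nhds 0) := by
  -- R x n is a fixed point of every U ∈ S
  have hRfix : ∀ n, ∀ U ∈ S, U (R (x n)) = R (x n) := by
    intro n U hU
    have : R (x n) ∈ {x ∈ C | ∀ U ∈ S, U x = x} := by
      rw [← hRrange]; exact ⟨x n, hxC n, rfl⟩
    exact this.2 U hU
  have hRC : ∀ n, R (x n) ∈ C := fun n => hRmaps (hxC n)
  have hTRC : ∀ n, T (R (x n)) ∈ C := fun n => hTmaps (hRC n)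
  -- T (R x n) is a fixed point of every U ∈ S
  have hUTRfix : ∀ n, ∀ U ∈ S, U (T (R (x n))) = T (R (x n)) := by
    intro n U hU
    rw [← hTcomm U hU _ (hRC n), hRfix n U hU]
  -- hence R fixes T (R x n)
  have hRTRfix : ∀ n, R (T (R (x n))) = T (R (x n)) := fun n =>
    hRretr _ (hTRC n) (hUTRfix n)
  have key : ∀ (c : ℝ), (∀ n, ‖(fun n => ‖T (R (x n)) - x n‖) n‖ ≤ c) → True := fun _ _ => trivial
  have hlim2 : Tendsto (fun n => 2 * ‖T (R (x n)) - x n‖) atTop (nhds 0) := by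
    simpa using hafps.const_mul 2
  have hlim3 : Tendsto (fun n => 3 * ‖T (R (x n)) - x n‖) atTop (nhds 0) := by
    simpa using hafps.const_mul 3
  have hS : ∀ U ∈ S, Tendsto (fun n => ‖U (x n) - x n‖) atTop (nhds 0) := by
    intro U hU
    refine squeeze_zero (fun n => norm_nonneg _) (fun n => ?_) hlim2
    calc ‖U (x n) - x n‖ ≤ ‖U (x n) - U (T (R (x n)))‖ + ‖U (T (R (x n))) - x n‖ :=
          norm_sub_le_norm_sub_add_norm_sub _ _ _
      _ ≤ ‖x n - T (R (x n))‖ + ‖T (R (x n)) - x n‖ := by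
          have h := hSnonexp U hU _ (hxC n) _ (hTRC n)
          rw [hUTRfix n U hU] at h ⊢
          exact add_le_add_left h _
      _ = 2 * ‖T (R (x n)) - x n‖ := by rw [norm_sub_rev]; ring
  have hR : Tendsto (fun n => ‖R (x n) - x n‖) atTop (nhds 0) := by
    refine squeeze_zero (fun n => norm_nonneg _) (fun n => ?_) hlim2
    calc ‖R (x n) - x n‖ ≤ ‖R (x n) - R (T (R (x n)))‖ + ‖R (T (R (x n))) - x n‖ :=
          norm_sub_le_norm_sub_add_norm_sub _ _ _
      _ ≤ ‖x n - T (R (x n))‖ + ‖T (R (x n)) - x n‖ := by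
          have h := hRnonexp _ (hxC n) _ (hTRC n)
          rw [hRTRfix n] at h ⊢
          exact add_le_add_left h _
      _ = 2 * ‖T (R (x n)) - x n‖ := by rw [norm_sub_rev]; ring
  refine ⟨hS, hR, ?_⟩
  refine squeeze_zero (fun n => norm_nonneg _) (fun n => ?_) hlim3
  calc ‖T (x n) - x n‖ ≤ ‖T (x n) - T (R (x n))‖ + ‖T (R (x n)) - x n‖ :=
        norm_sub_le_norm_sub_add_norm_sub _ _ _
    _ ≤ ‖x n - R (x n)‖ + ‖T (R (x n)) - x n‖ :=
        add_le_add_left (hTnonexp _ (hxC n) _ (hRC n)) _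
    _ ≤ 2 * ‖T (R (x n)) - x n‖ + ‖T (R (x n)) - x n‖ := by
        refine add_le_add_left ?_ _
        rw [norm_sub_rev]
        calc ‖R (x n) - x n‖ ≤ ‖R (x n) - R (T (R (x n)))‖ + ‖R (T (R (x n))) - x n‖ :=
              norm_sub_le_norm_sub_add_norm_sub _ _ _
          _ ≤ ‖x n - T (R (x n))‖ + ‖T (R (x n)) - x n‖ := by
              have h := hRnonexp _ (hxC n) _ (hTRC n)
              rw [hRTRfix n] at h ⊢
              exact add_le_add_left h _
          _ = 2 * ‖T (R (x n)) - x n‖ := by rw [norm_sub_rev]; ring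
    _ = 3 * ‖T (R (x n)) - x n‖ := by ring
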